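/- There exists a c.e. set which is coarsely computable but not generically computable; in fact there exists a simple c.e. set of density 0 (a c.e. set A of density 0 whose complement is infinite and contains no infinite c.e. subset), and any such set is coarsely computable but not generically computable. -/

import Mathlib

open Filter

open scoped Classical in
/-- `ρ_n(A) = |A ∩ {0,…,n}| / (n+1)`. -/
noncomputable def partialDensity (A : Set ℕ) (n : ℕ) : ℝ :=
  ((Finset.range (n + 1)).filter (· ∈ A)).card / (n + 1)

/-- The upper density of `A`: `limsup_n ρ_n(A)`. -/
noncomputable def upperDensity (A : Set ℕ) : ℝ :=
  Filter.limsup (partialDensity A) Filter.atTop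

/-- `A` has asymptotic density `r`: `ρ_n(A) → r`. -/
def HasDensity (A : Set ℕ) (r : ℝ) : Prop :=
  Filter.Tendsto (partialDensity A) Filter.atTop (nhds r)

open scoped Classical in
/-- The characteristic function of `A` (with values in `{0,1} ⊆ ℕ`). -/
noncomputable def charFun (A : Set ℕ) : ℕ → ℕ := fun n => if n ∈ A then 1 else 0

/-- `Φ` is a generic description of `A`: `Φ(x) = χ_A(x)` whenever `Φ(x)` is defined,
and the domain of `Φ` has density 1. -/
def IsGenericDescription (Φ : ℕ →. ℕ) (A : Set ℕ) : Prop :=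
  (∀ x m, m ∈ Φ x → m = charFun A x) ∧ HasDensity {x | (Φ x).Dom} 1

/-- `A` is generically computable: some partial computable function is a generic
description of `A`. -/
def GenericallyComputable (A : Set ℕ) : Prop :=
  ∃ Φ : ℕ →. ℕ, Partrec Φ ∧ IsGenericDescription Φ A

/-- `A` is computably enumerable: `A` is the domain of a partial computable function. -/
def CE (A : Set ℕ) : Prop :=
  ∃ f : ℕ →. ℕ, Partrec f ∧ A = {x | (f x).Dom}

/-- `A` is a computable set. -/
def ComputableSet (A : Set ℕ) : Prop := ComputablePred (· ∈ A)

/-- `A` is immune: infinite, with no infinite c.e. subset. -/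
def Immune (A : Set ℕ) : Prop :=
  A.Infinite ∧ ∀ W : Set ℕ, CE W → W.Infinite → ¬W ⊆ A

/-- `A` is bi-immune: both `A` and its complement are immune. -/
def BiImmune (A : Set ℕ) : Prop := Immune A ∧ Immune Aᶜ

/-- `A` and `B` are generically similar: their symmetric difference has density 0. -/
def GenericallySimilar (A B : Set ℕ) : Prop := HasDensity (symmDiff A B) 0

/-- `A` is coarsely computable: generically similar to a computable set. -/
def CoarselyComputable (A : Set ℕ) : Prop :=
  ∃ C : Set ℕ, ComputableSet C ∧ GenericallySimilar A C

/-- `R_k = {m : 2^k ∣ m, 2^(k+1) ∤ m}`. -/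
def Rset (k : ℕ) : Set ℕ := {m | 2 ^ k ∣ m ∧ ¬2 ^ (k + 1) ∣ m}

/-- `R(A) = ⋃_{n ∈ A} R_n`. -/
def RofSet (A : Set ℕ) : Set ℕ := ⋃ n ∈ A, Rset n

/-- Partial functions `ℕ →. ℕ` computable relative to a (total) oracle `O : ℕ → ℕ`. -/
inductive RecursiveInOracle (O : ℕ → ℕ) : (ℕ →. ℕ) → Prop
  | zero : RecursiveInOracle O (pure 0)
  | succ : RecursiveInOracle O fun n => Part.some (n + 1)
  | left : RecursiveInOracle O fun n => Part.some (Nat.unpair n).1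
  | right : RecursiveInOracle O fun n => Part.some (Nat.unpair n).2
  | oracle : RecursiveInOracle O fun n => Part.some (O n)
  | pair {f g : ℕ →. ℕ} : RecursiveInOracle O f → RecursiveInOracle O g →
      RecursiveInOracle O fun n => Nat.pair <$> f n <*> g n
  | comp {f g : ℕ →. ℕ} : RecursiveInOracle O f → RecursiveInOracle O g →
      RecursiveInOracle O fun n => g n >>= f
  | prec {f g : ℕ →. ℕ} : RecursiveInOracle O f → RecursiveInOracle O g →
      RecursiveInOracle O (Nat.unpaired fun a n =>
        n.rec (f a) fun y IH => do let i ← IH; g (Nat.pair a (Nat.pair y i)))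
  | rfind {f : ℕ →. ℕ} : RecursiveInOracle O f →
      RecursiveInOracle O fun a => Nat.rfind fun n => (fun m => m = 0) <$> f (Nat.pair a n)

/-- `A ≤_T B`: the characteristic function of `A` is computable relative to `B`. -/
def TuringReducibleSet (A B : Set ℕ) : Prop :=
  RecursiveInOracle (charFun B) fun n => Part.some (charFun A n)

/-- `A ≡_T B`. -/
def TuringEquivalentSet (A B : Set ℕ) : Prop :=
  TuringReducibleSet A B ∧ TuringReducibleSet B A

/-! ### Auxiliary material for `stmt9` -/

section Stmt9Aux

open Nat.Partrec (Code)
open Nat.Partrec.Code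

/-- The search condition for Post's construction: `n` codes a pair `(s, x)` such that
the `e`-th machine halts on `x` within `s` steps and `x > 2 ^ e`. -/
private def condb (e n : ℕ) : Bool :=
  (evaln n.unpair.1 (Denumerable.ofNat Code e) n.unpair.2).isSome
    && decide (2 ^ e < n.unpair.2)

/-- The element picked for machine `e` (if any). -/
private def pick (e : ℕ) : Part ℕ :=
  (Nat.rfind fun n => Part.some (condb e n)).map fun n => n.unpair.2

/-- Post's simple set of density 0. -/
private def Aset : Set ℕ := {x | ∃ e, x ∈ pick e}

private lemma condb_primrec : Primrec₂ condb := by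
  have hev : Primrec fun p : ℕ × ℕ =>
      evaln p.2.unpair.1 (Denumerable.ofNat Code p.1) p.2.unpair.2 :=
    primrec_evaln.comp <|
      ((Primrec.fst.comp (Primrec.unpair.comp Primrec.snd)).pair
        ((Primrec.ofNat Code).comp Primrec.fst)).pair
        (Primrec.snd.comp (Primrec.unpair.comp Primrec.snd))
  have h1 : Primrec fun p : ℕ × ℕ =>
      (evaln p.2.unpair.1 (Denumerable.ofNat Code p.1) p.2.unpair.2).isSome :=
    Primrec.option_isSome.comp hev
  have h2 : Primrec fun p : ℕ × ℕ => decide (2 ^ p.1 < p.2.unpair.2) :=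
    Primrec.nat_lt.comp
      ((Primrec₂.unpaired'.1 Nat.Primrec.pow).comp (Primrec.const 2) Primrec.fst)
      (Primrec.snd.comp (Primrec.unpair.comp Primrec.snd)) |>.decide
  exact (Primrec.and.comp h1 h2 : _)

private lemma pick_partrec : Partrec pick := by
  have h : Partrec fun e => Nat.rfind fun n => Part.some (condb e n) :=
    Partrec.rfind condb_primrec.to_comp.partrec₂
  exact h.map ((Primrec.snd.comp (Primrec.unpair.comp Primrec.snd)).to_comp.to₂)

private lemma mem_pick {e x : ℕ} (h : x ∈ pick e) :
    2 ^ e < x ∧ ((Denumerable.ofNat Code e).eval x).Dom := by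
  obtain ⟨n, hn, hx⟩ := (Part.mem_map_iff _).mp h
  have hc : condb e n = true := (Part.mem_some_iff.mp (Nat.rfind_spec hn)).symm
  rw [condb, Bool.and_eq_true, decide_eq_true_iff] at hc
  obtain ⟨y, hy⟩ := Option.isSome_iff_exists.mp hc.1
  subst hx
  exact ⟨hc.2, Part.dom_iff_mem.mpr ⟨y, evaln_sound hy⟩⟩

private lemma pick_dom {e x : ℕ} (hx : ((Denumerable.ofNat Code e).eval x).Dom)
    (hgt : 2 ^ e < x) : (pick e).Dom := by
  obtain ⟨y, hy⟩ := Part.dom_iff_mem.mp hx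
  obtain ⟨k, hk⟩ := evaln_complete.mp hy
  have hc : condb e (Nat.pair k x) = true := by
    rw [condb, Bool.and_eq_true, decide_eq_true_iff]
    refine ⟨?_, by simpa using hgt⟩
    simp only [Nat.unpair_pair]
    exact Option.isSome_iff_exists.mpr ⟨y, hk⟩
  have : (Nat.rfind fun n => Part.some (condb e n)).Dom :=
    Nat.rfind_dom.mpr ⟨Nat.pair k x, Part.mem_some_iff.mpr hc.symm, fun {m} _ => trivial⟩
  simpa [pick] using this

/-- Helper partial function whose domain captures `q.unpair.2 ∈ pick q.unpair.1`. -/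
private def Fq : ℕ →. ℕ := fun q =>
  (pick q.unpair.1).bind fun y => Nat.rfind fun _ => Part.some (decide (y = q.unpair.2))

private lemma Fq_partrec : Partrec Fq := by
  have h1 : Partrec fun q : ℕ => pick q.unpair.1 :=
    pick_partrec.comp (Primrec.fst.comp Primrec.unpair).to_comp
  have hp : Partrec fun x : (ℕ × ℕ) × ℕ =>
      (Part.some (decide (x.1.2 = x.1.1.unpair.2)) : Part Bool) :=
    ((Primrec.eq.comp (Primrec.snd.comp Primrec.fst)
      (Primrec.snd.comp (Primrec.unpair.comp (Primrec.fst.comp Primrec.fst)))).decide.to_comp).partrec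
  have h2 : Partrec₂ fun (q y : ℕ) =>
      Nat.rfind fun _ => Part.some (decide (y = q.unpair.2)) :=
    Partrec.rfind (hp : Partrec₂ fun (a : ℕ × ℕ) (_ : ℕ) =>
      (Part.some (decide (a.2 = a.1.unpair.2)) : Part Bool))
  exact h1.bind h2

private lemma rfind_const_dom {b : Bool} :
    (Nat.rfind fun _ => Part.some b).Dom ↔ b = true := by
  constructor
  · rintro ⟨n, hn, -⟩
    exact (Part.mem_some_iff.mp hn).symm
  · intro hb
    exact Nat.rfind_dom.mpr ⟨0, Part.mem_some_iff.mpr hb.symm, fun {m} _ => trivial⟩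

private lemma Fq_dom {q : ℕ} : (Fq q).Dom ↔ q.unpair.2 ∈ pick q.unpair.1 := by
  rw [Fq]
  constructor
  · intro h
    obtain ⟨v, hv⟩ := Part.dom_iff_mem.mp h
    obtain ⟨y, hy, hr⟩ := Part.mem_bind_iff.mp hv
    have : decide (y = q.unpair.2) = true := rfind_const_dom.mp (Part.dom_iff_mem.mpr ⟨v, hr⟩)
    rw [decide_eq_true_iff] at this
    exact this ▸ hy
  · intro h
    refine Part.dom_iff_mem.mpr ?_
    have hd : (Nat.rfind fun _ : ℕ =>
        Part.some (decide (q.unpair.2 = q.unpair.2))).Dom :=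
      rfind_const_dom.mpr (by simp)
    obtain ⟨n, hn⟩ := Part.dom_iff_mem.mp hd
    exact ⟨n, Part.mem_bind_iff.mpr ⟨_, h, hn⟩⟩

private lemma ce_Aset : CE Aset := by
  obtain ⟨c, hc⟩ := exists_code.mp (Partrec.nat_iff.mp Fq_partrec)
  refine ⟨fun x => Nat.rfind fun p =>
    Part.some ((evaln p.unpair.1 c (Nat.pair p.unpair.2 x)).isSome), ?_, ?_⟩
  · apply Partrec.rfind
    have hprim : Primrec fun a : ℕ × ℕ =>
        (evaln a.2.unpair.1 c (Nat.pair a.2.unpair.2 a.1)).isSome :=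
      Primrec.option_isSome.comp <| primrec_evaln.comp <|
        ((Primrec.fst.comp (Primrec.unpair.comp Primrec.snd)).pair (Primrec.const c)).pair
          (Primrec₂.natPair.comp (Primrec.snd.comp (Primrec.unpair.comp Primrec.snd)) Primrec.fst)
    exact (hprim.to_comp.partrec : _)
  · ext x
    constructor
    · rintro ⟨e, he⟩
      have hdom : (Fq (Nat.pair e x)).Dom := Fq_dom.mpr (by simpa using he)
      rw [← hc] at hdom
      obtain ⟨v, hv⟩ := Part.dom_iff_mem.mp hdom
      obtain ⟨k, hk⟩ := evaln_complete.mp hv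
      refine Nat.rfind_dom.mpr ⟨Nat.pair k e, ?_, fun {m} _ => trivial⟩
      refine Part.mem_some_iff.mpr ?_
      simp only [Nat.unpair_pair]
      exact (Option.isSome_iff_exists.mpr ⟨v, hk⟩).symm
    · rintro ⟨p, hp, -⟩
      have hb : (evaln p.unpair.1 c (Nat.pair p.unpair.2 x)).isSome = true :=
        (Part.mem_some_iff.mp hp).symm
      obtain ⟨v, hv⟩ := Option.isSome_iff_exists.mp hb
      have : (Fq (Nat.pair p.unpair.2 x)).Dom := by
        rw [← hc]
        exact Part.dom_iff_mem.mpr ⟨v, evaln_sound hv⟩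
      have := Fq_dom.mp this
      simp only [Nat.unpair_pair] at this
      exact ⟨p.unpair.2, this⟩

/-! #### Density lemmas -/

private lemma pd_nonneg (A : Set ℕ) (n : ℕ) : 0 ≤ partialDensity A n := by
  unfold partialDensity; positivity

open scoped Classical in
private lemma pd_le (A B : Set ℕ) (hAB : A ⊆ B) (n : ℕ) :
    partialDensity A n ≤ partialDensity B n := by
  unfold partialDensity
  gcongr

open scoped Classical in
private lemma pd_union (A B : Set ℕ) (n : ℕ) :
    partialDensity (A ∪ B) n ≤ partialDensity A n + partialDensity B n := by
  unfold partialDensity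
  rw [← add_div]
  gcongr
  rw [← Nat.cast_add, Nat.cast_le]
  refine le_trans (Finset.card_le_card fun x hx => ?_) (Finset.card_union_le
    ((Finset.range (n + 1)).filter (· ∈ A)) ((Finset.range (n + 1)).filter (· ∈ B)))
  simp only [Finset.mem_filter] at hx
  simp only [Finset.mem_union, Finset.mem_filter]
  rcases hx.2 with h | h
  · exact Or.inl ⟨hx.1, h⟩
  · exact Or.inr ⟨hx.1, h⟩

open scoped Classical in
private lemma pd_compl_add (A : Set ℕ) (n : ℕ) :
    partialDensity A n + partialDensity Aᶜ n = 1 := by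
  unfold partialDensity
  rw [← add_div, div_eq_one_iff_eq (by positivity), ← Nat.cast_add]
  have h := Finset.card_filter_add_card_filter_not
    (s := Finset.range (n + 1)) (p := (· ∈ A))
  rw [Finset.card_range] at h
  have hcast : ((n : ℝ) + 1) = ((n + 1 : ℕ) : ℝ) := by push_cast; ring
  rw [hcast, Nat.cast_inj]
  conv_rhs => rw [← h]
  congr 1
  apply congrArg Finset.card
  ext x
  simp [Finset.mem_filter]

open scoped Classical in
private lemma hasDensity_zero_of_finite {S : Set ℕ} (hS : S.Finite) : HasDensity S 0 := by
  have hcard : ∀ n, partialDensity S n ≤ (hS.toFinset.card : ℝ) / ((n : ℝ) + 1) := by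
    intro n
    unfold partialDensity
    gcongr
    intro x hx
    rw [Finset.mem_filter] at hx
    exact hS.mem_toFinset.mpr hx.2
  apply squeeze_zero (fun n => pd_nonneg S n) hcard
  have h1 : Tendsto (fun n : ℕ => (1 : ℝ) / ((n : ℝ) + 1)) atTop (nhds 0) :=
    tendsto_one_div_add_atTop_nhds_zero_nat
  have h2 := h1.const_mul (hS.toFinset.card : ℝ)
  rw [mul_zero] at h2
  exact h2.congr fun n => by rw [mul_one_div]

private lemma compl_infinite {A : Set ℕ} (h : HasDensity A 0) : Aᶜ.Infinite := by
  by_contra hfin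
  rw [Set.not_infinite] at hfin
  have h2 := hasDensity_zero_of_finite hfin
  have hsum : Tendsto (fun n => partialDensity A n + partialDensity Aᶜ n) atTop (nhds 0) := by
    simpa using h.add h2
  have hone : Tendsto (fun n => partialDensity A n + partialDensity Aᶜ n) atTop (nhds 1) := by
    have he : (fun n => partialDensity A n + partialDensity Aᶜ n) = fun _ => (1 : ℝ) :=
      funext fun n => pd_compl_add A n
    rw [he]
    exact tendsto_const_nhds
  exact absurd (tendsto_nhds_unique hsum hone) (by norm_num)

private lemma tendsto_logdiv :
    Tendsto (fun n : ℕ => ((Nat.log 2 n : ℝ) + 1) / ((n : ℝ) + 1)) atTop (nhds 0) := by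
  have hlog : Tendsto (fun x : ℝ => Real.log x / x) atTop (nhds 0) :=
    Real.isLittleO_log_id_atTop.tendsto_div_nhds_zero
  have hnat : Tendsto (fun n : ℕ => Real.log n / (n : ℝ)) atTop (nhds 0) :=
    hlog.comp tendsto_natCast_atTop_atTop
  have h1 : Tendsto (fun n : ℕ => (1 : ℝ) / ((n : ℝ) + 1)) atTop (nhds 0) :=
    tendsto_one_div_add_atTop_nhds_zero_nat
  have h2 : Tendsto (fun n : ℕ =>
      (Real.log 2)⁻¹ * (Real.log n / (n : ℝ)) + 1 / ((n : ℝ) + 1)) atTop (nhds 0) := by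
    have := (hnat.const_mul (Real.log 2)⁻¹).add h1
    simpa using this
  apply squeeze_zero' (Eventually.of_forall fun n => by positivity) ?_ h2
  filter_upwards [eventually_ge_atTop 1] with n hn
  have hn1 : (1 : ℝ) ≤ (n : ℝ) := by exact_mod_cast hn
  have hlog2 : (0 : ℝ) < Real.log 2 := Real.log_pos (by norm_num)
  have hNlog : (Nat.log 2 n : ℝ) ≤ Real.log n / Real.log 2 := by
    have := Real.natLog_le_logb n 2
    rwa [Real.logb] at this
  have hA : (Nat.log 2 n : ℝ) / ((n : ℝ) + 1) ≤ (Nat.log 2 n : ℝ) / (n : ℝ) := by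
    gcongr
    linarith
  have hB : (Nat.log 2 n : ℝ) / (n : ℝ) ≤ (Real.log n / Real.log 2) / (n : ℝ) := by
    gcongr
  have hC : (Real.log n / Real.log 2) / (n : ℝ) =
      (Real.log 2)⁻¹ * (Real.log n / (n : ℝ)) := by
    field_simp
  rw [add_div]
  exact add_le_add ((hA.trans hB).trans hC.le) le_rfl

open scoped Classical in
private noncomputable def wfn : ℕ → ℕ :=
  fun x => if h' : ∃ e, x ∈ pick e then h'.choose else 0

private lemma wfn_spec {x : ℕ} (h : ∃ e, x ∈ pick e) : x ∈ pick (wfn x) := by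
  unfold wfn
  rw [dif_pos h]
  exact h.choose_spec

open scoped Classical in
private lemma Aset_pd_bound (n : ℕ) :
    partialDensity Aset n ≤ ((Nat.log 2 n : ℝ) + 1) / ((n : ℝ) + 1) := by
  have hcard : ((Finset.range (n + 1)).filter (· ∈ Aset)).card
      ≤ (Finset.range (Nat.log 2 n + 1)).card := by
    apply Finset.card_le_card_of_injOn wfn
    · intro x hx
      rw [Finset.mem_coe, Finset.mem_filter] at hx
      have hp := wfn_spec hx.2
      have hlt := (mem_pick hp).1
      have hxn : x ≤ n := Nat.lt_succ_iff.mp (Finset.mem_range.mp hx.1)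
      have hpow : 0 < 2 ^ wfn x := Nat.pow_pos (by norm_num)
      have hn0 : n ≠ 0 := by omega
      rw [Finset.mem_coe, Finset.mem_range, Nat.lt_succ_iff]
      exact (Nat.le_log_iff_pow_le (by norm_num) hn0).mpr (by omega)
    · intro x hx y hy hxy
      simp only [Finset.coe_filter, Set.mem_setOf_eq] at hx hy
      exact Part.mem_unique (wfn_spec hx.2) (by rw [hxy]; exact wfn_spec hy.2)
  rw [Finset.card_range] at hcard
  unfold partialDensity
  gcongr
  · exact_mod_cast hcard

private lemma Aset_density : HasDensity Aset 0 :=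
  squeeze_zero (fun n => pd_nonneg Aset n) Aset_pd_bound tendsto_logdiv

private lemma Aset_compl_immune : Immune Asetᶜ := by
  refine ⟨compl_infinite Aset_density, ?_⟩
  rintro W ⟨f, hf, rfl⟩ hWinf hWsub
  obtain ⟨c, hc⟩ := exists_code.mp (Partrec.nat_iff.mp hf)
  obtain ⟨x, hxW, hxgt⟩ := hWinf.exists_gt (2 ^ Encodable.encode c)
  have hdomx : ((Denumerable.ofNat Code (Encodable.encode c)).eval x).Dom := by
    rw [Denumerable.ofNat_encode, hc]
    exact hxW
  obtain ⟨y, hy⟩ := Part.dom_iff_mem.mp (pick_dom hdomx hxgt)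
  have hyA : y ∈ Aset := ⟨_, hy⟩
  have hyW : ((Denumerable.ofNat Code (Encodable.encode c)).eval y).Dom := (mem_pick hy).2
  rw [Denumerable.ofNat_encode, hc] at hyW
  exact hWsub hyW hyA

private lemma computableSet_empty : ComputableSet (∅ : Set ℕ) := by
  refine ⟨fun _ => Decidable.isFalse (fun h => h), ?_⟩
  exact (Computable.const false).of_eq fun n => by simp

private lemma not_gc {A : Set ℕ} (hA0 : HasDensity A 0) (hImm : Immune Aᶜ) :
    ¬GenericallyComputable A := by
  rintro ⟨Φ, hΦ, hdesc, hdom⟩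
  have hWce : CE {x | (0 : ℕ) ∈ Φ x} := by
    refine ⟨fun x => (Φ x).bind fun m => Nat.rfind fun _ => Part.some (decide (m = 0)), ?_, ?_⟩
    · refine hΦ.bind ?_
      exact Partrec.rfind (((Primrec.eq.comp (Primrec.snd.comp Primrec.fst)
        (Primrec.const 0)).decide.to_comp).partrec : Partrec₂ fun (a : ℕ × ℕ) (_ : ℕ) =>
          (Part.some (decide (a.2 = 0)) : Part Bool))
    · ext x
      simp only [Set.mem_setOf_eq]
      constructor
      · intro h0
        have hd : (Nat.rfind fun _ : ℕ => Part.some (decide ((0 : ℕ) = 0))).Dom :=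
          rfind_const_dom.mpr (by simp)
        obtain ⟨m, hm⟩ := Part.dom_iff_mem.mp hd
        exact Part.dom_iff_mem.mpr ⟨m, Part.mem_bind_iff.mpr ⟨0, h0, hm⟩⟩
      · intro h
        obtain ⟨v, hv⟩ := Part.dom_iff_mem.mp h
        obtain ⟨m, hm, hr⟩ := Part.mem_bind_iff.mp hv
        have hm0 : decide (m = 0) = true :=
          rfind_const_dom.mp (Part.dom_iff_mem.mpr ⟨v, hr⟩)
        rw [decide_eq_true_iff] at hm0
        exact hm0 ▸ hm
  have hWsub : {x | (0 : ℕ) ∈ Φ x} ⊆ Aᶜ := by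
    intro x hx hxA
    have h01 := hdesc x 0 hx
    simp only [charFun, if_pos hxA] at h01
    exact absurd h01 (by norm_num)
  have hsub2 : {x | (Φ x).Dom} ∩ Aᶜ ⊆ {x | (0 : ℕ) ∈ Φ x} := by
    rintro x ⟨hd, hc⟩
    have hget : (Φ x).get hd ∈ Φ x := Part.get_mem hd
    have hval := hdesc x _ hget
    simp only [charFun, if_neg hc] at hval
    exact hval ▸ hget
  have hinf : ({x | (Φ x).Dom} ∩ Aᶜ).Infinite := by
    by_contra hfin
    rw [Set.not_infinite] at hfin
    have hd0 := hasDensity_zero_of_finite hfin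
    have hle : ∀ n, partialDensity {x | (Φ x).Dom} n ≤
        partialDensity A n + partialDensity ({x | (Φ x).Dom} ∩ Aᶜ) n := by
      intro n
      refine le_trans (pd_le _ _ ?_ n) (pd_union _ _ n)
      intro x hx
      by_cases hc : x ∈ A
      · exact Or.inl hc
      · exact Or.inr ⟨hx, hc⟩
    have h10 : (1 : ℝ) ≤ 0 + 0 :=
      le_of_tendsto_of_tendsto' hdom (hA0.add hd0) hle
    norm_num at h10
  exact hImm.2 _ hWce (hinf.mono hsub2) hWsub

end Stmt9Aux

/-- there exists a simple c.e. set of density 0, and any such set is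
coarsely computable but not generically computable. -/
theorem stmt9 :
    (∃ A : Set ℕ, CE A ∧ HasDensity A 0 ∧ Immune Aᶜ) ∧
      ∀ A : Set ℕ, CE A → HasDensity A 0 → Immune Aᶜ →
        CoarselyComputable A ∧ ¬GenericallyComputable A := by
  constructor
  · exact ⟨Aset, ce_Aset, Aset_density, Aset_compl_immune⟩
  · intro A hce h0 himm
    refine ⟨⟨∅, computableSet_empty, ?_⟩, not_gc h0 himm⟩
    have hsd : symmDiff A (∅ : Set ℕ) = A := by
      rw [← Set.bot_eq_empty, symmDiff_bot]
    rw [GenericallySimilar, hsd]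
    exact h0
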